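/- Lipschitz dependence of the behavioral Q-value on the reward and behavior functions: let Q^π(r, ψ) denote the unique fixed point of the behavioral Bellman operator built from reward r and behavior function ψ (with fixed p, π, α, γ). Then for any r₁, r₂, ψ₁, ψ₂ : S → A → ℝ, ‖Q^π(r₁, ψ₁) − Q^π(r₂, ψ₂)‖∞ ≤ (‖r₁ − r₂‖∞ + α · ‖ψ₁ − ψ₂‖∞) / (1 − γ). -/
import Mathlib


/-- Lipschitz dependence of the behavioral Q-value on the reward and behavior functions. -/
theorem behavioral_q_value_lipschitz
    {S A : Type*} [Fintype S] [Nonempty S] [Fintype A] [Nonempty A]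
    (p : S → A → S → ℝ) (hp0 : ∀ s a s', 0 ≤ p s a s') (hp1 : ∀ s a, ∑ s', p s a s' = 1)
    (π : S → A → ℝ) (hπ0 : ∀ s a, 0 ≤ π s a) (hπ1 : ∀ s, ∑ a, π s a = 1)
    (α : ℝ) (hα : 0 ≤ α) (γ : ℝ) (hγ0 : 0 ≤ γ) (hγ1 : γ < 1)
    (r₁ r₂ ψ₁ ψ₂ : S → A → ℝ)
    (Q₁ Q₂ : S → A → ℝ)
    -- `Q₁` and `Q₂` are the (unique) fixed points of the behavioral Bellman operators
    -- built from `(r₁, ψ₁)` and `(r₂, ψ₂)`, respectively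
    (hQ₁ : ∀ s a, Q₁ s a =
      r₁ s a + ∑ s', p s a s' * ∑ a', π s' a' * (α * ψ₁ s' a' + γ * Q₁ s' a'))
    (hQ₂ : ∀ s a, Q₂ s a =
      r₂ s a + ∑ s', p s a s' * ∑ a', π s' a' * (α * ψ₂ s' a' + γ * Q₂ s' a')) :
    ‖Q₁ - Q₂‖ ≤ (‖r₁ - r₂‖ + α * ‖ψ₁ - ψ₂‖) / (1 - γ) := by
  set Rr := ‖r₁ - r₂‖ with hRr
  set Rψ := ‖ψ₁ - ψ₂‖ with hRψ
  set D := ‖Q₁ - Q₂‖ with hD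
  have hRr0 : 0 ≤ Rr := norm_nonneg _
  have hRψ0 : 0 ≤ Rψ := norm_nonneg _
  have hD0 : 0 ≤ D := norm_nonneg _
  have habs : ∀ (f g : S → A → ℝ) (s : S) (a : A), |f s a - g s a| ≤ ‖f - g‖ := by
    intro f g s a
    have h1 : ‖(f - g) s‖ ≤ ‖f - g‖ := norm_le_pi_norm (f - g) s
    have h2 : ‖(f - g) s a‖ ≤ ‖(f - g) s‖ := norm_le_pi_norm ((f - g) s) a
    simpa [Real.norm_eq_abs] using h2.trans h1
  have key : ∀ s a, |Q₁ s a - Q₂ s a| ≤ Rr + (α * Rψ + γ * D) := by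
    intro s a
    have hinner : ∀ s', |∑ a', π s' a' * (α * (ψ₁ s' a' - ψ₂ s' a') + γ * (Q₁ s' a' - Q₂ s' a'))|
        ≤ α * Rψ + γ * D := by
      intro s'
      calc |∑ a', π s' a' * (α * (ψ₁ s' a' - ψ₂ s' a') + γ * (Q₁ s' a' - Q₂ s' a'))|
          ≤ ∑ a', |π s' a' * (α * (ψ₁ s' a' - ψ₂ s' a') + γ * (Q₁ s' a' - Q₂ s' a'))| :=
            Finset.abs_sum_le_sum_abs _ _
        _ ≤ ∑ a', π s' a' * (α * Rψ + γ * D) := by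
            apply Finset.sum_le_sum
            intro a' _
            rw [abs_mul, abs_of_nonneg (hπ0 s' a')]
            apply mul_le_mul_of_nonneg_left _ (hπ0 s' a')
            calc |α * (ψ₁ s' a' - ψ₂ s' a') + γ * (Q₁ s' a' - Q₂ s' a')|
                ≤ |α * (ψ₁ s' a' - ψ₂ s' a')| + |γ * (Q₁ s' a' - Q₂ s' a')| := abs_add_le _ _
              _ ≤ α * Rψ + γ * D := by
                  rw [abs_mul, abs_mul, abs_of_nonneg hα, abs_of_nonneg hγ0]
                  exact add_le_add (mul_le_mul_of_nonneg_left (habs _ _ _ _) hα)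
                    (mul_le_mul_of_nonneg_left (habs _ _ _ _) hγ0)
        _ = α * Rψ + γ * D := by rw [← Finset.sum_mul, hπ1 s', one_mul]
    have hdiff : Q₁ s a - Q₂ s a = (r₁ s a - r₂ s a) +
        ∑ s', p s a s' * ∑ a', π s' a' * (α * (ψ₁ s' a' - ψ₂ s' a') + γ * (Q₁ s' a' - Q₂ s' a')) := by
      rw [hQ₁ s a, hQ₂ s a]
      have h1 : ∀ s', (∑ a', π s' a' * (α * (ψ₁ s' a' - ψ₂ s' a') + γ * (Q₁ s' a' - Q₂ s' a')))
          = (∑ a', π s' a' * (α * ψ₁ s' a' + γ * Q₁ s' a'))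
            - (∑ a', π s' a' * (α * ψ₂ s' a' + γ * Q₂ s' a')) := by
        intro s'
        rw [← Finset.sum_sub_distrib]
        exact Finset.sum_congr rfl fun a' _ => by ring
      simp only [h1]
      simp only [mul_sub, Finset.sum_sub_distrib]
      ring
    rw [hdiff]
    calc |(r₁ s a - r₂ s a) + ∑ s', p s a s' *
          ∑ a', π s' a' * (α * (ψ₁ s' a' - ψ₂ s' a') + γ * (Q₁ s' a' - Q₂ s' a'))|
        ≤ |r₁ s a - r₂ s a| + |∑ s', p s a s' *
          ∑ a', π s' a' * (α * (ψ₁ s' a' - ψ₂ s' a') + γ * (Q₁ s' a' - Q₂ s' a'))| := abs_add_le _ _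
      _ ≤ Rr + (α * Rψ + γ * D) := by
          apply add_le_add (habs _ _ _ _)
          calc |∑ s', p s a s' * ∑ a', π s' a' *
                (α * (ψ₁ s' a' - ψ₂ s' a') + γ * (Q₁ s' a' - Q₂ s' a'))|
              ≤ ∑ s', |p s a s' * ∑ a', π s' a' *
                (α * (ψ₁ s' a' - ψ₂ s' a') + γ * (Q₁ s' a' - Q₂ s' a'))| :=
                Finset.abs_sum_le_sum_abs _ _
            _ ≤ ∑ s', p s a s' * (α * Rψ + γ * D) := by
                apply Finset.sum_le_sum
                intro s' _
                rw [abs_mul, abs_of_nonneg (hp0 s a s')]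
                exact mul_le_mul_of_nonneg_left (hinner s') (hp0 s a s')
            _ = α * Rψ + γ * D := by rw [← Finset.sum_mul, hp1 s a, one_mul]
  have hDle : D ≤ Rr + (α * Rψ + γ * D) := by
    rw [hD]
    apply pi_norm_le_iff_of_nonneg (by positivity) |>.2
    intro s
    apply pi_norm_le_iff_of_nonneg (by positivity) |>.2
    intro a
    simpa [Real.norm_eq_abs] using key s a
  rw [le_div_iff₀ (by linarith : 0 < 1 - γ)]
  nlinarith [hDle]
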